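/- Let $1 \leq p \leq 2$, let $n \geq 1$, let $(\lambda_k)_{1 \leq k \leq n}$ be a non-negative, non-increasing finite sequence with $\lambda_1 > 0$, and set $\Lambda_k = \sum_{i=1}^k \lambda_i$ and $C_{n,p,\lambda} = \Lambda_n^p / \sum_{i=1}^n \lambda_i \Lambda_i^{p-1}$. Then for every non-negative, non-increasing sequence $(a_k)_{1 \leq k \leq n}$, $\left(\sum_{k=1}^n \lambda_k a_k\right)^p \leq C_{n,p,\lambda} \sum_{k=1}^n \lambda_k a_k \left(\sum_{i=1}^k \lambda_i a_i\right)^{p-1}$. -/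

import Mathlib

set_option maxHeartbeats 1000000

open Finset MeasureTheory intervalIntegral

-- monotone chain from step
lemma mono_chain (n : ℕ) (f : ℕ → ℝ) (h : ∀ i, i < n → f i ≤ f (i+1)) :
    ∀ i j, i ≤ j → j ≤ n → f i ≤ f j := by
  intro i j hij
  induction j, hij using Nat.le_induction with
  | base => intro _; exact le_rfl
  | succ j hij ih =>
    intro hjn
    exact (ih (by omega)).trans (h j (by omega))

-- antitone chain from 1-based step
lemma anti_chain (n : ℕ) (f : ℕ → ℝ) (h : ∀ k, 1 ≤ k → k + 1 ≤ n → f (k+1) ≤ f k) :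
    ∀ i j, 1 ≤ i → i ≤ j → j ≤ n → f j ≤ f i := by
  intro i j h1 hij
  induction j, hij using Nat.le_induction with
  | base => intro _; exact le_rfl
  | succ j hij ih =>
    intro hjn
    exact (h j (by omega) (by omega)).trans (ih (by omega))

lemma min_concave_step (a b c s : ℝ) (hab : a ≤ b) (hbc : b ≤ c)
    (h : c - b ≤ b - a) : min c s - min b s ≤ min b s - min a s := by
  rcases le_total b s with hbs | hsb
  · rw [min_eq_left hbs, min_eq_left (hab.trans hbs)]
    have h1 : min c s ≤ c := min_le_left _ _
    linarith
  · rw [min_eq_right hsb, min_eq_right (hsb.trans hbc)]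
    have h1 : min a s ≤ s := min_le_right _ _
    linarith

lemma abel_aux (x y : ℕ → ℝ) (hy0 : ∀ i, 0 ≤ y i) (hym : ∀ i, y (i+1) ≤ y i)
    (hpre : ∀ m, ∑ i ∈ range m, y i ≤ ∑ i ∈ range m, x i) :
    ∀ N, y N * ∑ i ∈ range N, (x i - y i) ≤ ∑ i ∈ range N, y i * (x i - y i) := by
  intro N
  induction N with
  | zero => simp
  | succ N ih =>
    have hD : 0 ≤ ∑ i ∈ range (N+1), (x i - y i) := by
      have := hpre (N+1)
      rw [Finset.sum_sub_distrib]
      linarith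
    have hDN : 0 ≤ ∑ i ∈ range N, (x i - y i) := by
      have := hpre N
      rw [Finset.sum_sub_distrib]
      linarith
    have h1 : y (N+1) * ∑ i ∈ range (N+1), (x i - y i) ≤
        y N * ∑ i ∈ range (N+1), (x i - y i) :=
      mul_le_mul_of_nonneg_right (hym N) hD
    rw [sum_range_succ (fun i => y i * (x i - y i))]
    rw [sum_range_succ (fun i => x i - y i)] at h1 ⊢
    nlinarith [ih]

lemma sq_sum_le (N : ℕ) (x y : ℕ → ℝ) (hy0 : ∀ i, 0 ≤ y i) (hym : ∀ i, y (i+1) ≤ y i)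
    (hpre : ∀ m, ∑ i ∈ range m, y i ≤ ∑ i ∈ range m, x i)
    (htot : ∑ i ∈ range N, x i = ∑ i ∈ range N, y i) :
    ∑ i ∈ range N, y i ^ 2 ≤ ∑ i ∈ range N, x i ^ 2 := by
  have habel := abel_aux x y hy0 hym hpre N
  have hD : ∑ i ∈ range N, (x i - y i) = 0 := by
    rw [Finset.sum_sub_distrib, htot, sub_self]
  rw [hD, mul_zero] at habel
  have h1 : ∑ i ∈ range N, y i ^ 2 ≤ ∑ i ∈ range N, y i * x i := by
    have : ∑ i ∈ range N, y i * (x i - y i) =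
        (∑ i ∈ range N, y i * x i) - ∑ i ∈ range N, y i ^ 2 := by
      rw [← Finset.sum_sub_distrib]
      exact Finset.sum_congr rfl fun i _ => by ring
    linarith [this ▸ habel]
  have hcs := Finset.sum_mul_sq_le_sq_mul_sq (range N) y x
  have hA : 0 ≤ ∑ i ∈ range N, y i ^ 2 := Finset.sum_nonneg fun i _ => sq_nonneg _
  have hB : 0 ≤ ∑ i ∈ range N, x i ^ 2 := Finset.sum_nonneg fun i _ => sq_nonneg _
  nlinarith [h1, hcs, hA, hB]

lemma step_id (W W' s : ℝ) (hWW : W ≤ W') :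
    (W' - W) * min W' s =
      (min W' s ^ 2 - min W s ^ 2) / 2 + (min W' s - min W s) ^ 2 / 2
        + s * ((W' - W) - (min W' s - min W s)) := by
  rcases le_total W' s with h | h
  · rw [min_eq_left h, min_eq_left (hWW.trans h)]; ring
  · rw [min_eq_right h]
    ring

lemma sum_min_id (n : ℕ) (V : ℕ → ℝ) (s : ℝ) (hs : 0 ≤ s) (hV0 : V 0 = 0)
    (hVmono : ∀ i, i < n → V i ≤ V (i+1)) :
    ∀ m, m ≤ n → ∑ i ∈ range m, (V (i+1) - V i) * min (V (i+1)) s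
      = min (V m) s ^ 2 / 2 + (∑ i ∈ range m, (min (V (i+1)) s - min (V i) s) ^ 2) / 2
        + s * (V m - min (V m) s) := by
  intro m
  induction m with
  | zero => intro _; simp [hV0, min_eq_left hs]
  | succ m ih =>
    intro hm
    have ihm := ih (by omega)
    rw [sum_range_succ, sum_range_succ (fun i => (min (V (i+1)) s - min (V i) s) ^ 2), ihm,
      step_id (V m) (V (m+1)) s (hVmono m (by omega))]
    ring

lemma lemmaB (n : ℕ) (Lam V : ℕ → ℝ) (s : ℝ) (hs : 0 ≤ s)
    (hL0 : Lam 0 = 0) (hV0 : V 0 = 0)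
    (hLmono : ∀ i, i < n → Lam i ≤ Lam (i+1))
    (hLconc : ∀ i, i + 1 < n → Lam (i+2) - Lam (i+1) ≤ Lam (i+1) - Lam i)
    (hVmono : ∀ i, i < n → V i ≤ V (i+1))
    (hdom : ∀ i, i ≤ n → Lam i ≤ V i)
    (hend : V n = Lam n) :
    ∑ i ∈ range n, (Lam (i+1) - Lam i) * min (Lam (i+1)) s ≤
      ∑ i ∈ range n, (V (i+1) - V i) * min (V (i+1)) s := by
  set x : ℕ → ℝ := fun i => if i < n then min (V (i+1)) s - min (V i) s else 0 with hx
  set y : ℕ → ℝ := fun i => if i < n then min (Lam (i+1)) s - min (Lam i) s else 0 with hy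
  have hxsum : ∀ m, ∑ i ∈ range m, x i = min (V (min m n)) s := by
    intro m
    induction m with
    | zero => simp [hV0, min_eq_left hs]
    | succ m ih =>
      rw [sum_range_succ, ih]
      by_cases hm : m < n
      · have e1 : min m n = m := by omega
        have e2 : min (m+1) n = m + 1 := by omega
        rw [e1, e2, hx]
        simp only [hm, if_pos]
        ring
      · have e1 : min m n = n := by omega
        have e2 : min (m+1) n = n := by omega
        rw [e1, e2, hx]
        simp only [hm, if_neg, if_false]
        ring
  have hysum : ∀ m, ∑ i ∈ range m, y i = min (Lam (min m n)) s := by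
    intro m
    induction m with
    | zero => simp [hL0, min_eq_left hs]
    | succ m ih =>
      rw [sum_range_succ, ih]
      by_cases hm : m < n
      · have e1 : min m n = m := by omega
        have e2 : min (m+1) n = m + 1 := by omega
        rw [e1, e2, hy]
        simp only [hm, if_pos]
        ring
      · have e1 : min m n = n := by omega
        have e2 : min (m+1) n = n := by omega
        rw [e1, e2, hy]
        simp only [hm, if_neg, if_false]
        ring
  have hy0 : ∀ i, 0 ≤ y i := by
    intro i
    rw [hy]
    by_cases hi : i < n
    · simp only [hi, if_pos]
      have := min_le_min (hLmono i hi) (le_refl s)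
      linarith
    · simp [hi]
  have hym : ∀ i, y (i+1) ≤ y i := by
    intro i
    by_cases hi : i + 1 < n
    · rw [hy]
      simp only [hi, if_pos, show i < n by omega]
      exact min_concave_step (Lam i) (Lam (i+1)) (Lam (i+2)) s (hLmono i (by omega))
        (hLmono (i+1) hi) (hLconc i hi)
    · have : y (i+1) = 0 := by rw [hy]; simp [hi]
      rw [this]; exact hy0 i
  have hpre : ∀ m, ∑ i ∈ range m, y i ≤ ∑ i ∈ range m, x i := by
    intro m
    rw [hxsum, hysum]
    exact min_le_min (hdom _ (min_le_right m n)) (le_refl s)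
  have htot : ∑ i ∈ range n, x i = ∑ i ∈ range n, y i := by
    rw [hxsum, hysum, min_self, hend]
  have hsq := sq_sum_le n x y hy0 hym hpre htot
  have hIdV := sum_min_id n V s hs hV0 hVmono n le_rfl
  have hIdL := sum_min_id n Lam s hs hL0 hLmono n le_rfl
  have hxe : ∑ i ∈ range n, (min (V (i+1)) s - min (V i) s) ^ 2 = ∑ i ∈ range n, x i ^ 2 := by
    refine Finset.sum_congr rfl fun i hi => ?_
    rw [hx]; simp [Finset.mem_range.mp hi]
  have hye : ∑ i ∈ range n, (min (Lam (i+1)) s - min (Lam i) s) ^ 2 = ∑ i ∈ range n, y i ^ 2 := by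
    refine Finset.sum_congr rfl fun i hi => ?_
    rw [hy]; simp [Finset.mem_range.mp hi]
  rw [hIdV, hIdL, hxe, hye, hend]
  linarith

lemma II1a (q x : ℝ) (hq0 : 0 < q) (hq1 : q < 1) (hx : 0 < x) :
    IntervalIntegrable (fun s => min x s * s ^ (q - 2)) volume 0 x := by
  rw [intervalIntegrable_iff, Set.uIoc_of_le hx.le]
  have hbase : IntegrableOn (fun s : ℝ => s ^ (q - 1)) (Set.Ioc 0 x) volume := by
    have := intervalIntegrable_rpow' (a := 0) (b := x) (r := q - 1) (by linarith)
    rw [intervalIntegrable_iff, Set.uIoc_of_le hx.le] at this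
    exact this
  refine hbase.congr_fun (fun s hs => ?_) measurableSet_Ioc
  obtain ⟨hs0, hsx⟩ := hs
  rw [min_eq_right hsx, show q - 1 = (q - 2) + 1 by ring]
  beta_reduce
  rw [Real.rpow_add_one hs0.ne']
  ring

lemma II1b (q T x : ℝ) (hx : 0 < x) (hxT : x ≤ T) :
    IntervalIntegrable (fun s => min x s * s ^ (q - 2)) volume x T := by
  apply ContinuousOn.intervalIntegrable
  apply ContinuousOn.mul
  · exact (continuous_const.min continuous_id).continuousOn
  · apply ContinuousOn.rpow_const continuousOn_id
    intro s hs
    rw [Set.uIcc_of_le hxT] at hs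
    exact Or.inl (by linarith [hs.1] : s ≠ 0)

lemma II1 (q T x : ℝ) (hq0 : 0 < q) (hq1 : q < 1) (hx : 0 < x) (hxT : x ≤ T) :
    IntervalIntegrable (fun s => min x s * s ^ (q - 2)) volume 0 T :=
  (II1a q x hq0 hq1 hx).trans (II1b q T x hx hxT)

lemma Jval (q T x : ℝ) (hq0 : 0 < q) (hq1 : q < 1) (hx : 0 < x) (hxT : x ≤ T) :
    ∫ s in (0:ℝ)..T, min x s * s ^ (q - 2)
      = x ^ q * (1 / (q * (1 - q))) - x * (T ^ (q - 1) / (1 - q)) := by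
  rw [← integral_add_adjacent_intervals (II1a q x hq0 hq1 hx) (II1b q T x hx hxT)]
  have e1 : ∫ s in (0:ℝ)..x, min x s * s ^ (q - 2) = ∫ s in (0:ℝ)..x, s ^ (q - 1) := by
    apply intervalIntegral.integral_congr_ae
    filter_upwards with s
    intro hs
    rw [Set.uIoc_of_le hx.le] at hs
    obtain ⟨hs0, hsx⟩ := hs
    rw [min_eq_right hsx, show q - 1 = (q - 2) + 1 by ring, Real.rpow_add_one hs0.ne']
    ring
  have e2 : ∫ s in x..T, min x s * s ^ (q - 2) = ∫ s in x..T, x * s ^ (q - 2) := by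
    apply integral_congr
    intro s hs
    rw [Set.uIcc_of_le hxT] at hs
    show min x s * s ^ (q - 2) = x * s ^ (q - 2)
    rw [min_eq_left hs.1]
  rw [e1, e2, intervalIntegral.integral_const_mul, integral_rpow (Or.inl (by linarith : (-1:ℝ) < q - 1)),
    integral_rpow (Or.inr ⟨by intro h; apply absurd h; intro h'; linarith [h'] , by
      rw [Set.uIcc_of_le hxT]; intro h; exact absurd h.1 (not_le.mpr hx)⟩)]
  have hx' : (0:ℝ) ^ (q - 1 + 1) = 0 := by
    rw [Real.zero_rpow]; intro h; apply hq0.ne'; linarith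
  rw [hx']
  have e3 : q - 1 + 1 = q := by ring
  have e4 : q - 2 + 1 = q - 1 := by ring
  rw [e3, e4]
  have hxq : x ^ (q - 1) = x ^ q / x := Real.rpow_sub_one hx.ne' q
  rw [hxq]
  have h1 : q ≠ 0 := hq0.ne'
  have h2 : 1 - q ≠ 0 := by intro h; linarith
  have h2' : q - 1 ≠ 0 := by intro h; linarith
  have h3 : x ≠ 0 := hx.ne'
  field_simp
  ring

section
variable (n : ℕ) (Lam V : ℕ → ℝ)

lemma q1case (hL0 : Lam 0 = 0) (hV0 : V 0 = 0)
    (hLmono : ∀ i, i < n → Lam i ≤ Lam (i+1))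
    (hLconc : ∀ i, i + 1 < n → Lam (i+2) - Lam (i+1) ≤ Lam (i+1) - Lam i)
    (hVmono : ∀ i, i < n → V i ≤ V (i+1))
    (hdom : ∀ i, i ≤ n → Lam i ≤ V i)
    (hend : V n = Lam n) :
    ∑ i ∈ range n, (Lam (i+1) - Lam i) * Lam (i+1) ≤
      ∑ i ∈ range n, (V (i+1) - V i) * V (i+1) := by
  have hT0 : 0 ≤ Lam n := by
    have := mono_chain n Lam hLmono 0 n (Nat.zero_le n) le_rfl
    rw [hL0] at this; exact this
  have hB := lemmaB n Lam V (Lam n) hT0 hL0 hV0 hLmono hLconc hVmono hdom hend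
  have e1 : ∀ i ∈ range n, (Lam (i+1) - Lam i) * min (Lam (i+1)) (Lam n)
      = (Lam (i+1) - Lam i) * Lam (i+1) := by
    intro i hi
    rw [min_eq_left (mono_chain n Lam hLmono (i+1) n (mem_range.mp hi) le_rfl)]
  have e2 : ∀ i ∈ range n, (V (i+1) - V i) * min (V (i+1)) (Lam n)
      = (V (i+1) - V i) * V (i+1) := by
    intro i hi
    rw [← hend, min_eq_left (mono_chain n V hVmono (i+1) n (mem_range.mp hi) le_rfl)]
  rw [Finset.sum_congr rfl e1, Finset.sum_congr rfl e2] at hB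
  exact hB

lemma lemmaA (q : ℝ) (hq0 : 0 ≤ q) (hq1 : q ≤ 1)
    (hL0 : Lam 0 = 0) (hV0 : V 0 = 0)
    (hLpos : ∀ i, i < n → 0 < Lam (i+1))
    (hLmono : ∀ i, i < n → Lam i ≤ Lam (i+1))
    (hLconc : ∀ i, i + 1 < n → Lam (i+2) - Lam (i+1) ≤ Lam (i+1) - Lam i)
    (hVmono : ∀ i, i < n → V i ≤ V (i+1))
    (hdom : ∀ i, i ≤ n → Lam i ≤ V i)
    (hend : V n = Lam n) :
    ∑ i ∈ range n, (Lam (i+1) - Lam i) * Lam (i+1) ^ q ≤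
      ∑ i ∈ range n, (V (i+1) - V i) * V (i+1) ^ q := by
  rcases Nat.eq_zero_or_pos n with hn | hn
  · subst hn; simp
  rcases eq_or_lt_of_le hq0 with hq0' | hq0'
  · -- q = 0
    simp only [← hq0', Real.rpow_zero, mul_one]
    have h1 : ∑ i ∈ range n, (Lam (i+1) - Lam i) = Lam n - Lam 0 := Finset.sum_range_sub Lam n
    have h2 : ∑ i ∈ range n, (V (i+1) - V i) = V n - V 0 := Finset.sum_range_sub V n
    rw [h1, h2, hL0, hV0, hend]
  rcases eq_or_lt_of_le hq1 with hq1' | hq1'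
  · -- q = 1
    simp only [hq1', Real.rpow_one]
    exact q1case n Lam V hL0 hV0 hLmono hLconc hVmono hdom hend
  -- 0 < q < 1
  set T := Lam n with hTdef
  have hT : 0 < T := by
    have h := hLpos (n-1) (by omega)
    have e : n - 1 + 1 = n := by omega
    rw [e] at h
    exact h
  have hLam_pos : ∀ i, i < n → 0 < Lam (i+1) := hLpos
  have hLam_le : ∀ i, i < n → Lam (i+1) ≤ T := fun i hi =>
    mono_chain n Lam hLmono (i+1) n hi le_rfl
  have hV_pos : ∀ i, i < n → 0 < V (i+1) := fun i hi =>
    (hLpos i hi).trans_le (hdom (i+1) hi)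
  have hV_le : ∀ i, i < n → V (i+1) ≤ T := by
    intro i hi
    have h := mono_chain n V hVmono (i+1) n hi le_rfl
    rw [hend] at h
    exact h
  set f : ℝ → ℝ := fun s => ∑ i ∈ range n, (Lam (i+1) - Lam i) * (min (Lam (i+1)) s * s ^ (q-2)) with hf
  set g : ℝ → ℝ := fun s => ∑ i ∈ range n, (V (i+1) - V i) * (min (V (i+1)) s * s ^ (q-2)) with hg
  have hfint : IntervalIntegrable f volume 0 T := by
    rw [hf, show (fun s:ℝ => ∑ i ∈ range n, (Lam (i+1) - Lam i) * (min (Lam (i+1)) s * s ^ (q-2)))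
      = ∑ i ∈ range n, (fun s:ℝ => (Lam (i+1) - Lam i) * (min (Lam (i+1)) s * s ^ (q-2))) from by
        ext s; simp]
    apply IntervalIntegrable.sum
    intro i hi
    exact (II1 q T (Lam (i+1)) hq0' hq1' (hLam_pos i (mem_range.mp hi))
      (hLam_le i (mem_range.mp hi))).const_mul _
  have hgint : IntervalIntegrable g volume 0 T := by
    rw [hg, show (fun s:ℝ => ∑ i ∈ range n, (V (i+1) - V i) * (min (V (i+1)) s * s ^ (q-2)))
      = ∑ i ∈ range n, (fun s:ℝ => (V (i+1) - V i) * (min (V (i+1)) s * s ^ (q-2))) from by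
        ext s; simp]
    apply IntervalIntegrable.sum
    intro i hi
    exact (II1 q T (V (i+1)) hq0' hq1' (hV_pos i (mem_range.mp hi))
      (hV_le i (mem_range.mp hi))).const_mul _
  have hpt : ∀ s ∈ Set.Icc (0:ℝ) T, f s ≤ g s := by
    intro s hs
    have hB := lemmaB n Lam V s hs.1 hL0 hV0 hLmono hLconc hVmono hdom hend
    have hr : 0 ≤ s ^ (q-2) := Real.rpow_nonneg hs.1 _
    have ef : f s = (∑ i ∈ range n, (Lam (i+1) - Lam i) * min (Lam (i+1)) s) * s ^ (q-2) := by
      rw [hf, Finset.sum_mul]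
      exact Finset.sum_congr rfl fun i _ => by ring
    have eg : g s = (∑ i ∈ range n, (V (i+1) - V i) * min (V (i+1)) s) * s ^ (q-2) := by
      rw [hg, Finset.sum_mul]
      exact Finset.sum_congr rfl fun i _ => by ring
    rw [ef, eg]
    exact mul_le_mul_of_nonneg_right hB hr
  have hIneq := intervalIntegral.integral_mono_on hT.le hfint hgint hpt
  have hfval : ∫ s in (0:ℝ)..T, f s
      = ∑ i ∈ range n, (Lam (i+1) - Lam i) *
          (Lam (i+1) ^ q * (1 / (q * (1 - q))) - Lam (i+1) * (T ^ (q - 1) / (1 - q))) := by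
    rw [hf, intervalIntegral.integral_finset_sum]
    · refine Finset.sum_congr rfl fun i hi => ?_
      rw [intervalIntegral.integral_const_mul,
        Jval q T (Lam (i+1)) hq0' hq1' (hLam_pos i (mem_range.mp hi)) (hLam_le i (mem_range.mp hi))]
    · intro i hi
      exact (II1 q T (Lam (i+1)) hq0' hq1' (hLam_pos i (mem_range.mp hi))
        (hLam_le i (mem_range.mp hi))).const_mul _
  have hgval : ∫ s in (0:ℝ)..T, g s
      = ∑ i ∈ range n, (V (i+1) - V i) *
          (V (i+1) ^ q * (1 / (q * (1 - q))) - V (i+1) * (T ^ (q - 1) / (1 - q))) := by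
    rw [hg, intervalIntegral.integral_finset_sum]
    · refine Finset.sum_congr rfl fun i hi => ?_
      rw [intervalIntegral.integral_const_mul,
        Jval q T (V (i+1)) hq0' hq1' (hV_pos i (mem_range.mp hi)) (hV_le i (mem_range.mp hi))]
    · intro i hi
      exact (II1 q T (V (i+1)) hq0' hq1' (hV_pos i (mem_range.mp hi))
        (hV_le i (mem_range.mp hi))).const_mul _
  rw [hfval, hgval] at hIneq
  have eL : ∑ i ∈ range n, (Lam (i+1) - Lam i) *
        (Lam (i+1) ^ q * (1 / (q * (1 - q))) - Lam (i+1) * (T ^ (q - 1) / (1 - q)))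
      = (∑ i ∈ range n, (Lam (i+1) - Lam i) * Lam (i+1) ^ q) * (1 / (q * (1 - q)))
        - (∑ i ∈ range n, (Lam (i+1) - Lam i) * Lam (i+1)) * (T ^ (q - 1) / (1 - q)) := by
    rw [Finset.sum_mul, Finset.sum_mul, ← Finset.sum_sub_distrib]
    exact Finset.sum_congr rfl fun i _ => by ring
  have eV : ∑ i ∈ range n, (V (i+1) - V i) *
        (V (i+1) ^ q * (1 / (q * (1 - q))) - V (i+1) * (T ^ (q - 1) / (1 - q)))
      = (∑ i ∈ range n, (V (i+1) - V i) * V (i+1) ^ q) * (1 / (q * (1 - q)))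
        - (∑ i ∈ range n, (V (i+1) - V i) * V (i+1)) * (T ^ (q - 1) / (1 - q)) := by
    rw [Finset.sum_mul, Finset.sum_mul, ← Finset.sum_sub_distrib]
    exact Finset.sum_congr rfl fun i _ => by ring
  rw [eL, eV] at hIneq
  have hq1sum := q1case n Lam V hL0 hV0 hLmono hLconc hVmono hdom hend
  have hc2 : 0 ≤ T ^ (q - 1) / (1 - q) :=
    div_nonneg (Real.rpow_nonneg hT.le _) (by linarith)
  have hc1 : 0 < 1 / (q * (1 - q)) := by
    apply one_div_pos.mpr
    apply mul_pos hq0' (by linarith)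
  have hmul := mul_nonneg (sub_nonneg.mpr hq1sum) hc2
  have hfin : (∑ i ∈ range n, (Lam (i+1) - Lam i) * Lam (i+1) ^ q) * (1 / (q * (1 - q)))
      ≤ (∑ i ∈ range n, (V (i+1) - V i) * V (i+1) ^ q) * (1 / (q * (1 - q))) := by
    nlinarith [hIneq, hmul]
  exact le_of_mul_le_mul_right hfin hc1
end

lemma Icc_range (f : ℕ → ℝ) (n : ℕ) : ∑ i ∈ Icc 1 n, f i = ∑ i ∈ range n, f (i+1) := by
  induction n with
  | zero => simp
  | succ n ih => rw [Finset.sum_Icc_succ_top (by omega), ih, sum_range_succ]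

theorem refined_power_rule (p : ℝ) (hp1 : 1 ≤ p) (hp2 : p ≤ 2) (n : ℕ) (hn : 1 ≤ n)
    (lam : ℕ → ℝ) (hlam0 : ∀ k, 1 ≤ k → k ≤ n → 0 ≤ lam k)
    (hlammono : ∀ k, 1 ≤ k → k + 1 ≤ n → lam (k + 1) ≤ lam k) (hlam1 : 0 < lam 1)
    (Lam : ℕ → ℝ) (hLam : ∀ k, Lam k = ∑ i ∈ Finset.Icc 1 k, lam i)
    (a : ℕ → ℝ) (ha0 : ∀ k, 1 ≤ k → k ≤ n → 0 ≤ a k)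
    (hamono : ∀ k, 1 ≤ k → k + 1 ≤ n → a (k + 1) ≤ a k) :
    (∑ k ∈ Finset.Icc 1 n, lam k * a k) ^ p ≤
      (Lam n ^ p / ∑ i ∈ Finset.Icc 1 n, lam i * Lam i ^ (p - 1)) *
        ∑ k ∈ Finset.Icc 1 n, lam k * a k * (∑ i ∈ Finset.Icc 1 k, lam i * a i) ^ (p - 1) := by
  set q := p - 1 with hq
  have hq0 : 0 ≤ q := by rw [hq]; linarith
  have hq1 : q ≤ 1 := by rw [hq]; linarith
  set S : ℕ → ℝ := fun k => ∑ i ∈ Finset.Icc 1 k, lam i * a i with hS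
  show S n ^ p ≤ (Lam n ^ p / ∑ i ∈ Finset.Icc 1 n, lam i * Lam i ^ q) *
        ∑ k ∈ Finset.Icc 1 n, lam k * a k * S k ^ q
  -- basic facts
  have hterm : ∀ k, 1 ≤ k → k ≤ n → 0 ≤ lam k * a k := fun k h1 h2 =>
    mul_nonneg (hlam0 k h1 h2) (ha0 k h1 h2)
  have hS0 : S 0 = 0 := by simp [hS]
  have hL0 : Lam 0 = 0 := by simp [hLam]
  have hSnonneg : ∀ k, k ≤ n → 0 ≤ S k := by
    intro k hk
    rw [hS]
    exact Finset.sum_nonneg fun i hi => hterm i (mem_Icc.mp hi).1 ((mem_Icc.mp hi).2.trans hk)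
  have hLamnonneg : ∀ k, k ≤ n → 0 ≤ Lam k := by
    intro k hk
    rw [hLam]
    exact Finset.sum_nonneg fun i hi => hlam0 i (mem_Icc.mp hi).1 ((mem_Icc.mp hi).2.trans hk)
  have hLstep : ∀ i, Lam (i+1) = Lam i + lam (i+1) := by
    intro i
    rw [hLam, hLam, Finset.sum_Icc_succ_top (by omega)]
  have hSstep : ∀ i, S (i+1) = S i + lam (i+1) * a (i+1) := by
    intro i
    rw [hS]
    simp only
    rw [Finset.sum_Icc_succ_top (by omega)]
  have hLpos : ∀ i, i < n → 0 < Lam (i+1) := by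
    intro i hi
    rw [hLam]
    apply Finset.sum_pos' (fun j hj => hlam0 j (mem_Icc.mp hj).1 (by
      have := (mem_Icc.mp hj).2; omega))
    exact ⟨1, mem_Icc.mpr ⟨le_rfl, by omega⟩, hlam1⟩
  have hLmono : ∀ i, i < n → Lam i ≤ Lam (i+1) := by
    intro i hi
    rw [hLstep i]
    have := hlam0 (i+1) (by omega) (by omega)
    linarith
  have hLconc : ∀ i, i + 1 < n → Lam (i+2) - Lam (i+1) ≤ Lam (i+1) - Lam i := by
    intro i hi
    rw [hLstep (i+1), hLstep i]
    have := hlammono (i+1) (by omega) (by omega)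
    simp only [add_sub_cancel_left]
    exact this
  -- Chebyshev : Lam i * S n ≤ Lam n * S i for i ≤ n
  have hcheb : ∀ i, i ≤ n → Lam i * S n ≤ Lam n * S i := by
    intro i hi
    rcases Nat.eq_zero_or_pos i with h0 | h1
    · subst h0; rw [hL0, hS0, zero_mul, mul_zero]
    have hIcc : ∀ m : ℕ, Finset.Icc 1 m = Finset.Ioc 0 m := fun m => by
      rw [← Finset.Icc_add_one_left_eq_Ioc, zero_add]
    have hsplitS : S i + (∑ j ∈ Finset.Ioc i n, lam j * a j) = S n := by
      rw [hS]; simp only; rw [hIcc, hIcc]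
      exact Finset.sum_Ioc_consecutive _ (Nat.zero_le i) hi
    have hsplitL : Lam i + (∑ j ∈ Finset.Ioc i n, lam j) = Lam n := by
      rw [hLam, hLam, hIcc, hIcc]
      exact Finset.sum_Ioc_consecutive _ (Nat.zero_le i) hi
    have hai : 0 ≤ a i := ha0 i h1 hi
    have hT : (∑ j ∈ Finset.Ioc i n, lam j * a j) ≤ a i * (∑ j ∈ Finset.Ioc i n, lam j) := by
      rw [Finset.mul_sum]
      apply Finset.sum_le_sum
      intro j hj
      obtain ⟨hj1, hj2⟩ := mem_Ioc.mp hj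
      have haj : a j ≤ a i := anti_chain n a hamono i j h1 hj1.le hj2
      have hlj : 0 ≤ lam j := hlam0 j (by omega) hj2
      calc lam j * a j ≤ lam j * a i := mul_le_mul_of_nonneg_left haj hlj
        _ = a i * lam j := by ring
    have hSi : a i * Lam i ≤ S i := by
      rw [hS, hLam]
      simp only
      rw [Finset.mul_sum]
      apply Finset.sum_le_sum
      intro j hj
      obtain ⟨hj1, hj2⟩ := mem_Icc.mp hj
      have haj : a i ≤ a j := anti_chain n a hamono j i hj1 hj2 hi
      have hlj : 0 ≤ lam j := hlam0 j hj1 (by omega)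
      calc a i * lam j = lam j * a i := by ring
        _ ≤ lam j * a j := mul_le_mul_of_nonneg_left haj hlj
    have hM : 0 ≤ ∑ j ∈ Finset.Ioc i n, lam j := by
      apply Finset.sum_nonneg
      intro j hj
      exact hlam0 j (by have := (mem_Ioc.mp hj).1; omega) (mem_Ioc.mp hj).2
    have hLi : 0 ≤ Lam i := hLamnonneg i hi
    have h3 : Lam i * (∑ j ∈ Finset.Ioc i n, lam j * a j)
        ≤ Lam i * (a i * ∑ j ∈ Finset.Ioc i n, lam j) := mul_le_mul_of_nonneg_left hT hLi
    have h5 : Lam i * (a i * ∑ j ∈ Finset.Ioc i n, lam j)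
        = a i * Lam i * ∑ j ∈ Finset.Ioc i n, lam j := by ring
    have h4 : a i * Lam i * (∑ j ∈ Finset.Ioc i n, lam j)
        ≤ S i * ∑ j ∈ Finset.Ioc i n, lam j := mul_le_mul_of_nonneg_right hSi hM
    have e1 : Lam i * S n = Lam i * S i + Lam i * ∑ j ∈ Finset.Ioc i n, lam j * a j := by
      rw [← hsplitS]; ring
    have e2 : Lam n * S i = Lam i * S i + S i * ∑ j ∈ Finset.Ioc i n, lam j := by
      rw [← hsplitL]; ring
    linarith
  -- positivity of denominator
  have hD : 0 < ∑ i ∈ Finset.Icc 1 n, lam i * Lam i ^ q := by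
    apply Finset.sum_pos'
    · intro i hi
      exact mul_nonneg (hlam0 i (mem_Icc.mp hi).1 (mem_Icc.mp hi).2)
        (Real.rpow_nonneg (hLamnonneg i (mem_Icc.mp hi).2) q)
    · refine ⟨1, mem_Icc.mpr ⟨le_rfl, hn⟩, ?_⟩
      apply mul_pos hlam1
      apply Real.rpow_pos_of_pos
      have := hLpos 0 (by omega)
      simpa using this
  by_cases hSn : S n = 0
  · have hall : ∀ i ∈ Finset.Icc 1 n, lam i * a i = 0 := by
      intro i hi
      have := (Finset.sum_eq_zero_iff_of_nonneg (fun i hi =>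
        hterm i (mem_Icc.mp hi).1 (mem_Icc.mp hi).2)).mp hSn
      exact this i hi
    have hR : ∑ k ∈ Finset.Icc 1 n, lam k * a k * S k ^ q = 0 :=
      Finset.sum_eq_zero fun k hk => by rw [hall k hk, zero_mul]
    rw [hSn, hR, mul_zero, Real.zero_rpow (by intro h; linarith [hq0, hq1] : p ≠ 0)]
  have hSnpos : 0 < S n := lt_of_le_of_ne (hSnonneg n le_rfl) (Ne.symm hSn)
  have hLnpos : 0 < Lam n := by
    have := hLpos (n-1) (by omega)
    have e : n - 1 + 1 = n := by omega
    rwa [e] at this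
  set c : ℝ := Lam n / S n with hc
  have hcpos : 0 < c := div_pos hLnpos hSnpos
  set V : ℕ → ℝ := fun k => c * S k with hV
  have hA := lemmaA n Lam V q hq0 hq1 hL0 (by rw [hV]; simp [hS0]) hLpos hLmono hLconc
    (by
      intro i hi
      rw [hV]
      simp only
      apply mul_le_mul_of_nonneg_left _ hcpos.le
      rw [hSstep i]
      have := hterm (i+1) (by omega) (by omega)
      linarith)
    (by
      intro i hi
      rw [hV]
      simp only
      rw [hc, div_mul_eq_mul_div, le_div_iff₀ hSnpos]
      calc Lam i * S n ≤ Lam n * S i := hcheb i hi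
        _ = Lam n * S i := rfl)
    (by rw [hV]; simp only; rw [hc]; field_simp)
  -- rewrite both sides of hA
  have hAL : ∑ i ∈ range n, (Lam (i+1) - Lam i) * Lam (i+1) ^ q
      = ∑ i ∈ Finset.Icc 1 n, lam i * Lam i ^ q := by
    rw [Icc_range (fun i => lam i * Lam i ^ q) n]
    refine Finset.sum_congr rfl fun i _ => ?_
    rw [hLstep i]
    ring
  have hAV : ∑ i ∈ range n, (V (i+1) - V i) * V (i+1) ^ q
      = c ^ p * ∑ k ∈ Finset.Icc 1 n, lam k * a k * S k ^ q := by
    rw [Icc_range (fun k => lam k * a k * S k ^ q) n, Finset.mul_sum]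
    refine Finset.sum_congr rfl fun i hi => ?_
    have hi' : i < n := mem_range.mp hi
    rw [hV]
    simp only
    rw [Real.mul_rpow hcpos.le (hSnonneg (i+1) (by omega)), hSstep i]
    have hcp : c ^ p = c * c ^ q := by
      rw [hq, show p = 1 + (p - 1) by ring]
      rw [Real.rpow_add hcpos, Real.rpow_one]
      congr 1
      ring
    rw [show p = 1 + (p-1) by ring] at hcp
    rw [show (1 : ℝ) + (p - 1) = p by ring] at hcp
    rw [hcp]
    ring
  rw [hAL, hAV] at hA
  -- final algebra
  have hcpval : c ^ p = Lam n ^ p / S n ^ p := by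
    rw [hc, Real.div_rpow hLnpos.le hSnpos.le]
  rw [hcpval] at hA
  have hSp : 0 < S n ^ p := Real.rpow_pos_of_pos hSnpos p
  rw [div_mul_eq_mul_div, le_div_iff₀ hD]
  have step := mul_le_mul_of_nonneg_left hA hSp.le
  calc S n ^ p * (∑ i ∈ Finset.Icc 1 n, lam i * Lam i ^ q) ≤
      S n ^ p * (Lam n ^ p / S n ^ p * ∑ k ∈ Finset.Icc 1 n, lam k * a k * S k ^ q) := step
    _ = Lam n ^ p * ∑ k ∈ Finset.Icc 1 n, lam k * a k * S k ^ q := by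
        field_simp
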